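/- Suppose Ω satisfies Condition (*). In the polynomial ring ℤ[u_1,…,u_{k+2}], set ρ_{abc} = ε^a_b·u_a·u_b + ε^b_c·u_b·u_c + ε^c_a·u_c·u_a for distinct a,b,c, and Or_{abc} = ε^a_b·ε^b_c·ε^c_a. Then for all distinct p,q,r,s ∈ {1,…,k+2}: Or_{pqr}·(ε^q_s·ε^r_s·u_p·ρ_{qrs} + ε^r_s·ε^p_s·u_q·ρ_{rps} + ε^p_s·ε^q_s·u_r·ρ_{pqs}) = −u_p·u_q·u_r. -/

import Mathlib

open Finset

/-- Determinant of the submatrix of `Ω` obtained by deleting the rows in `s`. -/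
noncomputable def minorDet (k : ℕ) (Ω : Matrix (Fin (k + 2)) (Fin k) ℤ)
    (s : Finset (Fin (k + 2))) : ℤ :=
  if h : sᶜ.card = k then (Ω.submatrix (sᶜ.orderEmbOfFin h) id).det else 0

/-- `Δ_{pq}`: determinant of `Ω` with rows `p` and `q` deleted. -/
noncomputable def Delta (k : ℕ) (Ω : Matrix (Fin (k + 2)) (Fin k) ℤ) (p q : Fin (k + 2)) : ℤ :=
  minorDet k Ω {p, q}

theorem Delta_symm (k : ℕ) (Ω : Matrix (Fin (k + 2)) (Fin k) ℤ) (p q : Fin (k + 2)) :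
    Delta k Ω p q = Delta k Ω q p := by
  unfold Delta; rw [Finset.pair_comm]

/-- Condition (*). -/
def CondStar (k : ℕ) (Ω : Matrix (Fin (k + 2)) (Fin k) ℤ) : Prop :=
  (∀ p q : Fin (k + 2), p ≠ q → Delta k Ω p q ≠ 0) ∧
  (∀ p : Fin (k + 2), (Finset.univ.erase p).gcd (fun q => (Delta k Ω p q).natAbs) = 1)

/-- The sign `ε^p_q`. -/
noncomputable def eps (k : ℕ) (Ω : Matrix (Fin (k + 2)) (Fin k) ℤ) (p q : Fin (k + 2)) : ℤ :=
  (-1) ^ ((p : ℕ) + (q : ℕ)) * Int.sign ((p : ℤ) - (q : ℤ)) * Int.sign (Delta k Ω p q)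

/-- `v_p = Σ_i Ω_{pi} x_i`. -/
noncomputable def vP (k : ℕ) (Ω : Matrix (Fin (k + 2)) (Fin k) ℤ) (p : Fin (k + 2)) :
    MvPolynomial (Fin k) ℤ :=
  ∑ i : Fin k, MvPolynomial.C (Ω p i) * MvPolynomial.X i

/-- `ρ_{abc} = ε^a_b u_a u_b + ε^b_c u_b u_c + ε^c_a u_c u_a` in `ℤ[u_1,…,u_{k+2}]`. -/
noncomputable def rho (k : ℕ) (Ω : Matrix (Fin (k + 2)) (Fin k) ℤ) (a b c : Fin (k + 2)) :
    MvPolynomial (Fin (k + 2)) ℤ :=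
  MvPolynomial.C (eps k Ω a b) * MvPolynomial.X a * MvPolynomial.X b +
  MvPolynomial.C (eps k Ω b c) * MvPolynomial.X b * MvPolynomial.X c +
  MvPolynomial.C (eps k Ω c a) * MvPolynomial.X c * MvPolynomial.X a

/-- The ideal generated by the `ρ_{abc}` for `a, b, c` distinct. -/
noncomputable def rhoIdeal (k : ℕ) (Ω : Matrix (Fin (k + 2)) (Fin k) ℤ) :
    Ideal (MvPolynomial (Fin (k + 2)) ℤ) :=
  Ideal.span {g | ∃ a b c : Fin (k + 2), a ≠ b ∧ b ≠ c ∧ a ≠ c ∧ g = rho k Ω a b c}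

noncomputable def piv (k : ℕ) (Ω : Matrix (Fin (k + 2)) (Fin k) ℤ) (p q : Fin (k + 2)) : ℤ :=
  (-1) ^ ((p : ℕ) + (q : ℕ)) * Int.sign ((p : ℤ) - (q : ℤ)) * Delta k Ω p q

lemma piv_self (k : ℕ) (Ω : Matrix (Fin (k + 2)) (Fin k) ℤ) (p : Fin (k + 2)) :
    piv k Ω p p = 0 := by simp [piv]

lemma piv_antisymm (k : ℕ) (Ω : Matrix (Fin (k + 2)) (Fin k) ℤ) (p q : Fin (k + 2)) :
    piv k Ω q p = - piv k Ω p q := by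
  unfold piv
  rw [Delta_symm k Ω q p, show ((q : ℤ) - (p : ℤ)) = -((p : ℤ) - (q : ℤ)) by ring, Int.sign_neg,
    add_comm (q : ℕ) (p : ℕ)]
  ring

lemma piv_ne_zero {k : ℕ} {Ω : Matrix (Fin (k + 2)) (Fin k) ℤ} (hΩ : CondStar k Ω)
    {p q : Fin (k + 2)} (h : p ≠ q) : piv k Ω p q ≠ 0 := by
  have h1 : ((p : ℤ) - (q : ℤ)) ≠ 0 := by
    have : (p : ℕ) ≠ (q : ℕ) := fun hh => h (Fin.ext hh)
    omega
  have h2 : Int.sign ((p : ℤ) - (q : ℤ)) ≠ 0 := by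
    simpa using h1
  exact mul_ne_zero (mul_ne_zero (pow_ne_zero _ (by norm_num)) h2) (hΩ.1 p q h)

lemma sign_sq {x : ℤ} (h : x ≠ 0) : x.sign * x.sign = 1 := by
  rcases lt_or_gt_of_ne h with h' | h'
  · rw [Int.sign_eq_neg_one_iff_neg.mpr h']; norm_num
  · rw [Int.sign_eq_one_iff_pos.mpr h']; norm_num

lemma eps_eq_sign (k : ℕ) (Ω : Matrix (Fin (k + 2)) (Fin k) ℤ) (p q : Fin (k + 2)) :
    eps k Ω p q = Int.sign (piv k Ω p q) := by
  unfold eps piv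
  rw [Int.sign_mul, Int.sign_mul]
  congr 2
  · rcases Nat.even_or_odd ((p : ℕ) + (q : ℕ)) with h | h
    · rw [h.neg_one_pow]; rfl
    · rw [h.neg_one_pow]; rfl
  · rcases lt_trichotomy ((p : ℤ) - (q : ℤ)) 0 with h | h | h
    · rw [Int.sign_eq_neg_one_iff_neg.mpr h]; rfl
    · rw [h]; rfl
    · rw [Int.sign_eq_one_iff_pos.mpr h]; rfl

lemma eps_antisymm (k : ℕ) (Ω : Matrix (Fin (k + 2)) (Fin k) ℤ) (p q : Fin (k + 2)) :
    eps k Ω p q = - eps k Ω q p := by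
  rw [eps_eq_sign, eps_eq_sign, piv_antisymm k Ω q p, Int.sign_neg]

lemma eps_sq {k : ℕ} {Ω : Matrix (Fin (k + 2)) (Fin k) ℤ} (hΩ : CondStar k Ω)
    {p q : Fin (k + 2)} (h : p ≠ q) : eps k Ω p q * eps k Ω p q = 1 := by
  rw [eps_eq_sign]
  exact sign_sq (piv_ne_zero hΩ h)

lemma piv_kernel (k : ℕ) (Ω : Matrix (Fin (k + 2)) (Fin k) ℤ) (p : Fin (k + 2)) (i : Fin k) :
    ∑ t : Fin (k + 2), piv k Ω p t * Ω t i = 0 := by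
  have key : ∀ j : Fin (k + 1), piv k Ω p (p.succAbove j)
      = (-1) ^ ((p : ℕ) + (j : ℕ)) * Delta k Ω p (p.succAbove j) := by
    intro j
    unfold piv
    rcases lt_or_ge (Fin.castSucc j) p with h | h
    · rw [Fin.succAbove_of_castSucc_lt p j h]
      have hv : ((Fin.castSucc j : Fin (k + 2)) : ℕ) = (j : ℕ) := rfl
      have hlt : (j : ℕ) < (p : ℕ) := by
        have := (Fin.lt_iff_val_lt_val).mp h
        simpa [hv] using this
      have hs : Int.sign ((p : ℤ) - ((Fin.castSucc j : Fin (k + 2)) : ℤ)) = 1 := by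
        rw [Int.sign_eq_one_iff_pos]
        have : ((Fin.castSucc j : Fin (k + 2)) : ℤ) = ((j : ℕ) : ℤ) := by exact_mod_cast rfl
        rw [this]
        omega
      rw [hs, hv]
      ring
    · rw [Fin.succAbove_of_le_castSucc p j h]
      have hv : ((Fin.succ j : Fin (k + 2)) : ℕ) = (j : ℕ) + 1 := rfl
      have hle : (p : ℕ) ≤ (j : ℕ) := by
        have := (Fin.le_iff_val_le_val).mp h
        simpa using this
      have hs : Int.sign ((p : ℤ) - ((Fin.succ j : Fin (k + 2)) : ℤ)) = -1 := by
        rw [Int.sign_eq_neg_one_iff_neg]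
        have : ((Fin.succ j : Fin (k + 2)) : ℤ) = ((j : ℕ) : ℤ) + 1 := by
          rw [show ((Fin.succ j : Fin (k + 2)) : ℤ) = (((Fin.succ j : Fin (k + 2)) : ℕ) : ℤ) from rfl, hv]
          push_cast
          ring
        rw [this]
        omega
      rw [hs, hv, show (p : ℕ) + ((j : ℕ) + 1) = ((p : ℕ) + (j : ℕ)) + 1 by ring, pow_succ]
      ring
  set N : Matrix (Fin (k + 1)) (Fin (k + 1)) ℤ :=
    fun j => Fin.snoc (fun c : Fin k => Ω (p.succAbove j) c) (Ω (p.succAbove j) i) with hN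
  have hdet0 : N.det = 0 := by
    apply Matrix.det_zero_of_column_eq (Fin.castSucc_lt_last i).ne
    intro j
    simp [hN, Fin.snoc_castSucc, Fin.snoc_last]
  have hsub : ∀ j : Fin (k + 1), (N.submatrix j.succAbove (Fin.last k).succAbove).det
      = Delta k Ω p (p.succAbove j) := by
    intro j
    have hpne : p ≠ p.succAbove j := (Fin.succAbove_ne p j).symm
    have hpair : ({p, p.succAbove j} : Finset (Fin (k + 2))).card = 2 := by
      rw [Finset.card_insert_of_notMem (by simp [hpne]), Finset.card_singleton]
    have hcard : (({p, p.succAbove j} : Finset (Fin (k + 2)))ᶜ).card = k := by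
      rw [Finset.card_compl, hpair]
      simp
    have hmap : (fun a : Fin k => p.succAbove (j.succAbove a))
        = (({p, p.succAbove j} : Finset (Fin (k + 2)))ᶜ).orderEmbOfFin hcard := by
      apply Finset.orderEmbOfFin_unique
      · intro a
        simp only [Finset.mem_compl, Finset.mem_insert, Finset.mem_singleton]
        push_neg
        refine ⟨Fin.succAbove_ne p _, fun hh => ?_⟩
        exact (Fin.succAbove_ne j a) (Fin.succAbove_right_injective hh)
      · exact (Fin.strictMono_succAbove p).comp (Fin.strictMono_succAbove j)
    simp only [Delta, minorDet]
    rw [dif_pos hcard, ← hmap]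
    congr 1
    ext a b
    simp only [Matrix.submatrix_apply]
    simp [hN, Fin.succAbove_last, Fin.snoc_castSucc]
  have hexp : ∑ j : Fin (k + 1), (-1 : ℤ) ^ ((j : ℕ) + k) * Ω (p.succAbove j) i *
      Delta k Ω p (p.succAbove j) = 0 := by
    rw [← hdet0, Matrix.det_succ_column N (Fin.last k)]
    apply Finset.sum_congr rfl
    intro j _
    have h1 : N j (Fin.last k) = Ω (p.succAbove j) i := by simp [hN, Fin.snoc_last]
    rw [hsub j, h1, Fin.val_last]
  have hkk : ((-1 : ℤ)) ^ k * (-1) ^ k = 1 := by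
    rw [← pow_add]
    exact Even.neg_one_pow ⟨k, rfl⟩
  rw [Fin.sum_univ_succAbove (fun t => piv k Ω p t * Ω t i) p, piv_self, zero_mul, zero_add]
  calc ∑ j : Fin (k + 1), piv k Ω p (p.succAbove j) * Ω (p.succAbove j) i
      = ∑ j : Fin (k + 1), (-1 : ℤ) ^ ((p : ℕ) + k) *
          ((-1 : ℤ) ^ ((j : ℕ) + k) * Ω (p.succAbove j) i * Delta k Ω p (p.succAbove j)) := by
        apply Finset.sum_congr rfl
        intro j _
        rw [key j, pow_add, pow_add, pow_add]
        linear_combination (-((-1 : ℤ) ^ ((p : ℕ)) * (-1 : ℤ) ^ ((j : ℕ)) *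
          Delta k Ω p (p.succAbove j) * Ω (p.succAbove j) i)) * hkk
    _ = (-1 : ℤ) ^ ((p : ℕ) + k) * ∑ j : Fin (k + 1), (-1 : ℤ) ^ ((j : ℕ) + k) *
          Ω (p.succAbove j) i * Delta k Ω p (p.succAbove j) := by
        rw [Finset.mul_sum]
    _ = 0 := by rw [hexp, mul_zero]

lemma vanish {k : ℕ} {Ω : Matrix (Fin (k + 2)) (Fin k) ℤ} {q r : Fin (k + 2)} (hqr : q ≠ r)
    (hΔ : Delta k Ω q r ≠ 0) {x : Fin (k + 2) → ℤ}
    (hker : ∀ i, ∑ t : Fin (k + 2), x t * Ω t i = 0) (hq : x q = 0) (hr : x r = 0)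
    (s : Fin (k + 2)) : x s = 0 := by
  have hcard : (({q, r} : Finset (Fin (k + 2)))ᶜ).card = k := by
    rw [Finset.card_compl, Finset.card_insert_of_notMem (by simp [hqr]),
      Finset.card_singleton]
    simp
  set e := (({q, r} : Finset (Fin (k + 2)))ᶜ).orderEmbOfFin hcard with he
  have hdet : (Ω.submatrix e id).det = Delta k Ω q r := by
    simp only [Delta, minorDet]
    rw [dif_pos hcard]
  have hset : Finset.univ.map e.toEmbedding = (({q, r} : Finset (Fin (k + 2)))ᶜ) := by
    ext t
    simp only [Finset.mem_map, Finset.mem_univ, true_and]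
    constructor
    · rintro ⟨a, rfl⟩
      exact Finset.orderEmbOfFin_mem _ hcard a
    · intro ht
      have : t ∈ Set.range e := by
        rw [he, Finset.range_orderEmbOfFin]
        exact ht
      obtain ⟨a, ha⟩ := this
      exact ⟨a, ha⟩
  have hB : Matrix.vecMul (fun a => x (e a)) (Ω.submatrix e id) = 0 := by
    funext i
    have hsplit := Finset.sum_add_sum_compl ({q, r} : Finset (Fin (k + 2)))
      (fun t => x t * Ω t i)
    rw [hker i, Finset.sum_pair hqr, hq, hr, zero_mul, zero_mul, add_zero, zero_add] at hsplit
    have himg : ∑ t ∈ (({q, r} : Finset (Fin (k + 2)))ᶜ), x t * Ω t i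
        = ∑ a : Fin k, x (e a) * Ω (e a) i := by
      rw [← hset, Finset.sum_map]
      rfl
    simp only [Matrix.vecMul, dotProduct, Matrix.submatrix_apply, id_eq, Pi.zero_apply]
    rw [← himg, hsplit]
  have hz := Matrix.eq_zero_of_vecMul_eq_zero (by rw [hdet]; exact hΔ) hB
  by_cases hsq : s = q
  · rw [hsq]; exact hq
  by_cases hsr : s = r
  · rw [hsr]; exact hr
  have hmem : s ∈ (({q, r} : Finset (Fin (k + 2)))ᶜ) := by simp [hsq, hsr]
  have : s ∈ Set.range e := by rw [he, Finset.range_orderEmbOfFin]; exact hmem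
  obtain ⟨a, ha⟩ := this
  rw [← ha]
  exact congrFun hz a

lemma pluecker {k : ℕ} {Ω : Matrix (Fin (k + 2)) (Fin k) ℤ} (hΩ : CondStar k Ω)
    {p q r s : Fin (k + 2)} (hpq : p ≠ q) (hpr : p ≠ r) (hps : p ≠ s) (hqr : q ≠ r)
    (hqs : q ≠ s) (hrs : r ≠ s) :
    piv k Ω p q * piv k Ω r s - piv k Ω p r * piv k Ω q s + piv k Ω p s * piv k Ω q r = 0 := by
  set x : Fin (k + 2) → ℤ := fun t =>
    piv k Ω q r * piv k Ω p t - piv k Ω p r * piv k Ω q t + piv k Ω p q * piv k Ω r t with hx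
  have hker : ∀ i, ∑ t : Fin (k + 2), x t * Ω t i = 0 := by
    intro i
    have h1 := piv_kernel k Ω p i
    have h2 := piv_kernel k Ω q i
    have h3 := piv_kernel k Ω r i
    calc ∑ t : Fin (k + 2), x t * Ω t i
        = piv k Ω q r * ∑ t : Fin (k + 2), piv k Ω p t * Ω t i
          - piv k Ω p r * ∑ t : Fin (k + 2), piv k Ω q t * Ω t i
          + piv k Ω p q * ∑ t : Fin (k + 2), piv k Ω r t * Ω t i := by
          rw [Finset.mul_sum, Finset.mul_sum, Finset.mul_sum, ← Finset.sum_sub_distrib,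
            ← Finset.sum_add_distrib]
          exact Finset.sum_congr rfl fun t _ => by simp only [hx]; ring
      _ = 0 := by rw [h1, h2, h3]; ring
  have hq0 : x q = 0 := by
    simp only [hx]
    rw [piv_self, show piv k Ω r q = - piv k Ω q r from piv_antisymm k Ω q r]
    ring
  have hr0 : x r = 0 := by
    simp only [hx]
    rw [piv_self]
    ring
  have hs0 := vanish hqr (hΩ.1 q r hqr) hker hq0 hr0 s
  simp only [hx] at hs0
  linear_combination hs0

lemma sign_key {A B C : ℤ} (hA : A ≠ 0) (hB : B ≠ 0) (hC : C ≠ 0) (h : A - B + C = 0) :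
    -(A.sign * B.sign) + A.sign * C.sign - B.sign * C.sign = -1 := by
  have tri : ∀ x : ℤ, x ≠ 0 → x.sign = 1 ∧ 0 < x ∨ x.sign = -1 ∧ x < 0 := by
    intro x hx
    rcases lt_or_gt_of_ne hx with h' | h'
    · exact Or.inr ⟨Int.sign_eq_neg_one_iff_neg.mpr h', h'⟩
    · exact Or.inl ⟨Int.sign_eq_one_iff_pos.mpr h', h'⟩
  rcases tri A hA with ⟨h1, h1'⟩ | ⟨h1, h1'⟩ <;>
  rcases tri B hB with ⟨h2, h2'⟩ | ⟨h2, h2'⟩ <;>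
  rcases tri C hC with ⟨h3, h3'⟩ | ⟨h3, h3'⟩ <;>
  rw [h1, h2, h3] <;> norm_num <;> omega

lemma scalar_key {k : ℕ} {Ω : Matrix (Fin (k + 2)) (Fin k) ℤ} (hΩ : CondStar k Ω)
    {p q r s : Fin (k + 2)} (hpq : p ≠ q) (hpr : p ≠ r) (hps : p ≠ s) (hqr : q ≠ r)
    (hqs : q ≠ s) (hrs : r ≠ s) :
    eps k Ω p q * eps k Ω q r * eps k Ω r p *
      (eps k Ω q r * eps k Ω q s * eps k Ω r s + eps k Ω r p * eps k Ω p s * eps k Ω r s +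
       eps k Ω p q * eps k Ω p s * eps k Ω q s) = -1 := by
  have ha := piv_ne_zero hΩ hpq
  have hb := piv_ne_zero hΩ hpr
  have hc := piv_ne_zero hΩ hps
  have hd := piv_ne_zero hΩ hqr
  have he := piv_ne_zero hΩ hqs
  have hf := piv_ne_zero hΩ hrs
  have hpl := pluecker hΩ hpq hpr hps hqr hqs hrs
  have key := sign_key (mul_ne_zero ha hf) (mul_ne_zero hb he) (mul_ne_zero hc hd) hpl
  rw [Int.sign_mul, Int.sign_mul, Int.sign_mul] at key
  have sqa := sign_sq ha
  have sqb := sign_sq hb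
  have sqd := sign_sq hd
  rw [eps_eq_sign k Ω p q, eps_eq_sign k Ω q r, eps_eq_sign k Ω r p, eps_eq_sign k Ω p s,
    eps_eq_sign k Ω q s, eps_eq_sign k Ω r s,
    show piv k Ω r p = - piv k Ω p r from piv_antisymm k Ω p r, Int.sign_neg]
  linear_combination key + (-((piv k Ω p q).sign * (piv k Ω p r).sign * (piv k Ω q s).sign *
      (piv k Ω r s).sign)) * sqd +
    ((piv k Ω p q).sign * (piv k Ω p s).sign * (piv k Ω q r).sign * (piv k Ω r s).sign) * sqb +
    (-((piv k Ω p r).sign * (piv k Ω p s).sign * (piv k Ω q r).sign * (piv k Ω q s).sign)) * sqa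

/-- The identity
`Or_{pqr}(ε^q_s ε^r_s u_p ρ_{qrs} + ε^r_s ε^p_s u_q ρ_{rps} + ε^p_s ε^q_s u_r ρ_{pqs})
  = - u_p u_q u_r`. -/
theorem rho_combination_eq_neg_monomial (k : ℕ) (hk : 2 ≤ k)
    (Ω : Matrix (Fin (k + 2)) (Fin k) ℤ) (hΩ : CondStar k Ω) (p q r s : Fin (k + 2))
    (hpq : p ≠ q) (hpr : p ≠ r) (hps : p ≠ s) (hqr : q ≠ r) (hqs : q ≠ s) (hrs : r ≠ s) :
    MvPolynomial.C (eps k Ω p q * eps k Ω q r * eps k Ω r p) *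
      (MvPolynomial.C (eps k Ω q s * eps k Ω r s) * (MvPolynomial.X p * rho k Ω q r s) +
       MvPolynomial.C (eps k Ω r s * eps k Ω p s) * (MvPolynomial.X q * rho k Ω r p s) +
       MvPolynomial.C (eps k Ω p s * eps k Ω q s) * (MvPolynomial.X r * rho k Ω p q s)) =
      - (MvPolynomial.X p * MvPolynomial.X q * MvPolynomial.X r) := by
  have hsq4 := eps_sq hΩ hps
  have hsq5 := eps_sq hΩ hqs
  have hsq6 := eps_sq hΩ hrs
  have hkey := scalar_key hΩ hpq hpr hps hqr hqs hrs
  have K := congrArg (MvPolynomial.C (σ := Fin (k + 2)) (R := ℤ)) hkey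
  have S4 := congrArg (MvPolynomial.C (σ := Fin (k + 2)) (R := ℤ)) hsq4
  have S5 := congrArg (MvPolynomial.C (σ := Fin (k + 2)) (R := ℤ)) hsq5
  have S6 := congrArg (MvPolynomial.C (σ := Fin (k + 2)) (R := ℤ)) hsq6
  simp only [map_mul, map_add, map_neg, map_one] at K S4 S5 S6
  simp only [rho]
  rw [show eps k Ω s q = - eps k Ω q s from eps_antisymm k Ω s q,
    show eps k Ω s r = - eps k Ω r s from eps_antisymm k Ω s r,
    show eps k Ω s p = - eps k Ω p s from eps_antisymm k Ω s p]
  simp only [map_mul, map_neg]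
  linear_combination (MvPolynomial.X p * MvPolynomial.X q * MvPolynomial.X r) * K +
    (MvPolynomial.C (eps k Ω p q) * MvPolynomial.C (eps k Ω q r) * MvPolynomial.C (eps k Ω r p) *
      (MvPolynomial.C (eps k Ω r s) * MvPolynomial.X p * MvPolynomial.X q * MvPolynomial.X s -
       MvPolynomial.C (eps k Ω q s) * MvPolynomial.X p * MvPolynomial.X r * MvPolynomial.X s)) * S4 +
    (MvPolynomial.C (eps k Ω p q) * MvPolynomial.C (eps k Ω q r) * MvPolynomial.C (eps k Ω r p) *
      (MvPolynomial.C (eps k Ω p s) * MvPolynomial.X q * MvPolynomial.X r * MvPolynomial.X s -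
       MvPolynomial.C (eps k Ω r s) * MvPolynomial.X p * MvPolynomial.X q * MvPolynomial.X s)) * S5 +
    (MvPolynomial.C (eps k Ω p q) * MvPolynomial.C (eps k Ω q r) * MvPolynomial.C (eps k Ω r p) *
      (MvPolynomial.C (eps k Ω q s) * MvPolynomial.X p * MvPolynomial.X r * MvPolynomial.X s -
       MvPolynomial.C (eps k Ω p s) * MvPolynomial.X q * MvPolynomial.X r * MvPolynomial.X s)) * S6
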